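/- Let p ∈ (1,∞) and let O be a nonempty collection of Borel probability measures on ℝ^n with sup_{μ∈O} ∫_{ℝ^n} |z|^p dμ(z) < ∞, and which is sequentially compact with respect to E-weak convergence: every sequence {μ_j} ⊂ O has a subsequence {μ_{j_k}} and a measure μ ∈ O with ∫ g dμ_{j_k} → ∫ g dμ for every g ∈ E. Let F : ℝ^n → [0,∞] be lower semi-continuous. Then the function U(ξ) := inf_{μ∈O} ∫_{ℝ^n} F(z+ξ) dμ(z) is lower semi-continuous on ℝ^n. -/

import Mathlib

open MeasureTheory Filter Topology ENNReal

noncomputable section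

/-- ℝ^n as a Euclidean space -/
abbrev Vec (n : ℕ) := EuclideanSpace ℝ (Fin n)

variable {N n : ℕ}

/-- membership in the space E: continuous functions g with g(z)/(1+|z|^p) having a finite
limit as |z| → ∞ -/
def MemE (p : ℝ) (g : Vec n → ℝ) : Prop :=
  Continuous g ∧ ∃ l : ℝ, Tendsto (fun z => g z / (1 + ‖z‖ ^ p)) (cocompact (Vec n)) (nhds l)

/-- Moreau–Yosida type approximation of an `ℝ≥0∞`-valued function from below. -/
noncomputable def lscApprox (F : Vec n → ℝ≥0∞) (m : ℕ) (x : Vec n) : ℝ :=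
  ⨅ y : Vec n, ((min (F y) m).toReal + m * dist x y)

lemma lscApprox_term_nonneg (F : Vec n → ℝ≥0∞) (m : ℕ) (x y : Vec n) :
    0 ≤ (min (F y) m).toReal + m * dist x y :=
  add_nonneg ENNReal.toReal_nonneg (mul_nonneg (m.cast_nonneg) dist_nonneg)

lemma lscApprox_bddBelow (F : Vec n → ℝ≥0∞) (m : ℕ) (x : Vec n) :
    BddBelow (Set.range fun y : Vec n => ((min (F y) m).toReal + m * dist x y)) := by
  refine ⟨0, ?_⟩
  rintro r ⟨y, rfl⟩
  exact lscApprox_term_nonneg F m x y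

lemma lscApprox_nonneg (F : Vec n → ℝ≥0∞) (m : ℕ) (x : Vec n) :
    0 ≤ lscApprox F m x :=
  le_ciInf fun y => lscApprox_term_nonneg F m x y

lemma lscApprox_le (F : Vec n → ℝ≥0∞) (m : ℕ) (x : Vec n) :
    lscApprox F m x ≤ (min (F x) m).toReal := by
  have := ciInf_le (lscApprox_bddBelow F m x) x
  simpa [lscApprox] using this

lemma lscApprox_le_nat (F : Vec n → ℝ≥0∞) (m : ℕ) (x : Vec n) :
    lscApprox F m x ≤ m := by
  refine (lscApprox_le F m x).trans ?_
  have : (min (F x) (m : ℝ≥0∞)).toReal ≤ ((m : ℝ≥0∞)).toReal :=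
    ENNReal.toReal_mono (ENNReal.natCast_ne_top m) (min_le_right _ _)
  simpa using this

lemma ofReal_lscApprox_le (F : Vec n → ℝ≥0∞) (m : ℕ) (x : Vec n) :
    ENNReal.ofReal (lscApprox F m x) ≤ F x := by
  refine le_trans (ENNReal.ofReal_le_ofReal (lscApprox_le F m x)) ?_
  rw [ENNReal.ofReal_toReal (ne_top_of_le_ne_top (ENNReal.natCast_ne_top m) (min_le_right _ _))]
  exact min_le_left _ _

lemma lscApprox_lip (F : Vec n → ℝ≥0∞) (m : ℕ) (x x' : Vec n) :
    lscApprox F m x ≤ lscApprox F m x' + m * dist x x' := by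
  rw [← sub_le_iff_le_add]
  refine le_ciInf fun y => ?_
  rw [sub_le_iff_le_add]
  have h1 : lscApprox F m x ≤ (min (F y) m).toReal + m * dist x y :=
    ciInf_le (lscApprox_bddBelow F m x) y
  refine h1.trans ?_
  have : dist x y ≤ dist x x' + dist x' y := dist_triangle x x' y
  have h2 : (m : ℝ) * dist x y ≤ m * (dist x x' + dist x' y) :=
    mul_le_mul_of_nonneg_left this m.cast_nonneg
  nlinarith [h2]

lemma lscApprox_abs_sub (F : Vec n → ℝ≥0∞) (m : ℕ) (x x' : Vec n) :
    |lscApprox F m x - lscApprox F m x'| ≤ m * dist x x' := by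
  rw [abs_sub_le_iff]
  constructor
  · have := lscApprox_lip F m x x'
    linarith
  · have := lscApprox_lip F m x' x
    rw [dist_comm x' x] at this
    linarith

lemma lscApprox_continuous (F : Vec n → ℝ≥0∞) (m : ℕ) :
    Continuous (lscApprox F m) := by
  have : LipschitzWith (m : NNReal) (lscApprox F m) := by
    refine LipschitzWith.of_dist_le_mul fun x x' => ?_
    rw [Real.dist_eq]
    simpa using lscApprox_abs_sub F m x x'
  exact this.continuous

lemma lscApprox_mono (F : Vec n → ℝ≥0∞) {m m' : ℕ} (h : m ≤ m') (x : Vec n) :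
    lscApprox F m x ≤ lscApprox F m' x := by
  refine le_ciInf fun y => ?_
  refine (ciInf_le (lscApprox_bddBelow F m x) y).trans ?_
  refine add_le_add ?_ ?_
  · exact ENNReal.toReal_mono (ne_top_of_le_ne_top (ENNReal.natCast_ne_top m')
      (min_le_right _ _)) (min_le_min le_rfl (by exact_mod_cast Nat.cast_le.mpr h))
  · exact mul_le_mul_of_nonneg_right (by exact_mod_cast h) dist_nonneg

lemma lscApprox_iSup {F : Vec n → ℝ≥0∞} (hF : LowerSemicontinuous F) (x : Vec n) :
    (⨆ m : ℕ, ENNReal.ofReal (lscApprox F m x)) = F x := by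
  refine le_antisymm (iSup_le fun m => ofReal_lscApprox_le F m x) ?_
  by_contra hlt
  push_neg at hlt
  obtain ⟨a, ha1, ha2⟩ := exists_between hlt
  have haT : a ≠ ⊤ := ha2.ne_top
  -- from lower semicontinuity get a ball where F > a
  have := hF x a ha2
  rw [Metric.eventually_nhds_iff] at this
  obtain ⟨δ, hδ, hball⟩ := this
  obtain ⟨m, hm⟩ := exists_nat_ge (max a.toReal (a.toReal / δ))
  have hm1 : a.toReal ≤ m := (le_max_left _ _).trans hm
  have hm2 : a.toReal / δ ≤ m := (le_max_right _ _).trans hm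
  have hmδ : a.toReal ≤ m * δ := by
    rw [div_le_iff₀ hδ] at hm2; linarith
  have key : a.toReal ≤ lscApprox F m x := by
    refine le_ciInf fun y => ?_
    by_cases hy : dist y x < δ
    · have hFy : a < F y := hball hy
      have hamin : a ≤ min (F y) m := by
        refine le_min hFy.le ?_
        rw [← ENNReal.ofReal_toReal haT, ← ENNReal.ofReal_natCast m]
        exact ENNReal.ofReal_le_ofReal hm1
      have : a.toReal ≤ (min (F y) m).toReal :=
        ENNReal.toReal_mono (ne_top_of_le_ne_top (ENNReal.natCast_ne_top m)
          (min_le_right _ _)) hamin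
      have h0 : (0:ℝ) ≤ m * dist x y := mul_nonneg m.cast_nonneg dist_nonneg
      linarith
    · push_neg at hy
      have : (m:ℝ) * δ ≤ m * dist x y := by
        rw [dist_comm x y]
        exact mul_le_mul_of_nonneg_left hy m.cast_nonneg
      have h0 : (0:ℝ) ≤ (min (F y) m).toReal := ENNReal.toReal_nonneg
      linarith
  have : a ≤ ENNReal.ofReal (lscApprox F m x) := by
    rw [← ENNReal.ofReal_toReal haT]
    exact ENNReal.ofReal_le_ofReal key
  have : a ≤ ⨆ m : ℕ, ENNReal.ofReal (lscApprox F m x) :=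
    this.trans (le_iSup (fun m => ENNReal.ofReal (lscApprox F m x)) m)
  exact absurd ha1 (not_lt.mpr this)

lemma integrable_of_bounded_continuous {ν : Measure (Vec n)} [IsProbabilityMeasure ν]
    {f : Vec n → ℝ} (hf : Continuous f) {C : ℝ} (hC : ∀ z, ‖f z‖ ≤ C) :
    Integrable f ν :=
  Integrable.mono' (integrable_const C) hf.aestronglyMeasurable (Filter.Eventually.of_forall hC)

/-- Lemma: if O is a nonempty collection of Borel probability measures on ℝⁿ with uniformly
bounded p-th moments, sequentially compact for E-weak convergence, and F : ℝⁿ → [0,∞] is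
lower semi-continuous, then U(ξ) := inf_{μ ∈ O} ∫ F(z+ξ) dμ(z) is lower semi-continuous. -/
theorem inf_over_compact_family_lsc
    (hn : 0 < n) (p : ℝ) (hp : 1 < p)
    (O : Set (Measure (Vec n))) (hOne : O.Nonempty)
    (hprob : ∀ μ ∈ O, IsProbabilityMeasure μ)
    (hmom : ∃ M : ℝ≥0∞, M < ⊤ ∧ ∀ μ ∈ O, (∫⁻ z, ENNReal.ofReal (‖z‖ ^ p) ∂μ) ≤ M)
    (hcpt : ∀ μs : ℕ → Measure (Vec n), (∀ j, μs j ∈ O) →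
      ∃ φ : ℕ → ℕ, StrictMono φ ∧ ∃ μ ∈ O, ∀ g : Vec n → ℝ, MemE p g →
        Tendsto (fun k => ∫ z, g z ∂(μs (φ k))) atTop (nhds (∫ z, g z ∂μ)))
    (F : Vec n → ℝ≥0∞) (hF : LowerSemicontinuous F) :
    LowerSemicontinuous (fun ξ : Vec n =>
      sInf {y : ℝ≥0∞ | ∃ μ ∈ O, y = ∫⁻ z, F (z + ξ) ∂μ}) := by
  set U : Vec n → ℝ≥0∞ := fun ξ => sInf {y : ℝ≥0∞ | ∃ μ ∈ O, y = ∫⁻ z, F (z + ξ) ∂μ} with hU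
  intro ξ y hy
  obtain ⟨y', hyy', hy'U⟩ := exists_between hy
  have hy'T : y' ≠ ⊤ := hy'U.ne_top
  rw [eventually_iff_seq_eventually]
  intro x hx
  by_contra hcon
  rw [Filter.not_eventually] at hcon
  have hfreq : ∃ᶠ j in atTop, U (x j) ≤ y := hcon.mono fun j hj => not_lt.mp hj
  obtain ⟨φ, hφ, hφle⟩ := extraction_of_frequently_atTop hfreq
  -- choose measures realizing the infimum up to y'
  have hex : ∀ k, ∃ μ, μ ∈ O ∧ (∫⁻ z, F (z + x (φ k)) ∂μ) < y' := by
    intro k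
    have : U (x (φ k)) < y' := lt_of_le_of_lt (hφle k) hyy'
    rw [hU, sInf_lt_iff] at this
    obtain ⟨a, ⟨μ, hμ, rfl⟩, ha⟩ := this
    exact ⟨μ, hμ, ha⟩
  choose μs hμsO hμslt using hex
  obtain ⟨ψ, hψ, μ, hμO, hconv⟩ := hcpt μs hμsO
  haveI : IsProbabilityMeasure μ := hprob μ hμO
  haveI : ∀ k, IsProbabilityMeasure (μs (ψ k)) := fun k => hprob _ (hμsO (ψ k))
  -- U ξ ≤ ∫⁻ F(z+ξ) dμ, hence y' < ∫⁻ F(z+ξ) dμ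
  have hUle : U ξ ≤ ∫⁻ z, F (z + ξ) ∂μ := sInf_le ⟨μ, hμO, rfl⟩
  have hy'int : y' < ∫⁻ z, F (z + ξ) ∂μ := hy'U.trans_le hUle
  -- monotone convergence for the approximations
  have hmeas : ∀ m : ℕ, Measurable fun z : Vec n => ENNReal.ofReal (lscApprox F m (z + ξ)) := by
    intro m
    exact ENNReal.measurable_ofReal.comp
      (((lscApprox_continuous F m).comp (continuous_id.add continuous_const)).measurable)
  have hsup : (∫⁻ z, F (z + ξ) ∂μ) =
      ⨆ m : ℕ, ∫⁻ z, ENNReal.ofReal (lscApprox F m (z + ξ)) ∂μ := by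
    rw [← lintegral_iSup hmeas]
    · congr 1
      ext z
      exact (lscApprox_iSup hF (z + ξ)).symm
    · intro m m' hmm' z
      exact ENNReal.ofReal_le_ofReal (lscApprox_mono F hmm' _)
  rw [hsup] at hy'int
  obtain ⟨m, hm⟩ := lt_iSup_iff.mp hy'int
  set G : Vec n → ℝ := lscApprox F m with hG
  have hGc : Continuous G := lscApprox_continuous F m
  have hG0 : ∀ z, 0 ≤ G z := lscApprox_nonneg F m
  have hGm : ∀ z, G z ≤ m := lscApprox_le_nat F m
  have hGb : ∀ z, ‖G z‖ ≤ m := fun z => by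
    rw [Real.norm_eq_abs, abs_of_nonneg (hG0 z)]; exact hGm z
  -- G(· + ξ) belongs to E
  have hMemE : MemE p (fun z => G (z + ξ)) := by
    refine ⟨hGc.comp (continuous_id.add continuous_const), 0, ?_⟩
    have hden : Tendsto (fun z : Vec n => 1 + ‖z‖ ^ p) (cocompact (Vec n)) atTop := by
      have h1 : Tendsto (fun z : Vec n => ‖z‖) (cocompact (Vec n)) atTop :=
        tendsto_norm_cocompact_atTop
      have h2 : Tendsto (fun t : ℝ => t ^ p) atTop atTop := tendsto_rpow_atTop (by linarith)
      exact tendsto_atTop_add_const_left (cocompact (Vec n)) 1 (h2.comp h1)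
    have hzero : Tendsto (fun z : Vec n => (m : ℝ) / (1 + ‖z‖ ^ p)) (cocompact (Vec n))
        (nhds 0) := Tendsto.div_atTop tendsto_const_nhds hden
    refine squeeze_zero_norm (fun z => ?_) hzero
    have hpos : (0:ℝ) < 1 + ‖z‖ ^ p := by
      have : (0:ℝ) ≤ ‖z‖ ^ p := Real.rpow_nonneg (norm_nonneg z) p
      linarith
    rw [norm_div, Real.norm_eq_abs (1 + ‖z‖ ^ p), abs_of_pos hpos]
    gcongr
    exact hGb _
  -- convergence of integrals of the shifted approximant
  have hA : Tendsto (fun k => ∫ z, G (z + ξ) ∂(μs (ψ k))) atTop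
      (nhds (∫ z, G (z + ξ) ∂μ)) := hconv _ hMemE
  set ξk : ℕ → Vec n := fun k => x (φ (ψ k)) with hξk
  have htend : Tendsto ξk atTop (nhds ξ) := hx.comp ((hφ.comp hψ).tendsto_atTop)
  have hint : ∀ (ν : Measure (Vec n)) [IsProbabilityMeasure ν] (ξ' : Vec n),
      Integrable (fun z => G (z + ξ')) ν := by
    intro ν _ ξ'
    exact integrable_of_bounded_continuous
      (hGc.comp (continuous_id.add continuous_const)) (fun z => hGb _)
  have hdiff : ∀ k, ‖(∫ z, G (z + ξk k) ∂(μs (ψ k))) - ∫ z, G (z + ξ) ∂(μs (ψ k))‖ ≤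
      m * dist (ξk k) ξ := by
    intro k
    rw [← integral_sub (hint _ _) (hint _ _)]
    have hbd : ∀ z : Vec n, ‖G (z + ξk k) - G (z + ξ)‖ ≤ m * dist (ξk k) ξ := by
      intro z
      have := lscApprox_abs_sub F m (z + ξk k) (z + ξ)
      rw [dist_add_left] at this
      simpa [Real.norm_eq_abs] using this
    have := norm_integral_le_of_norm_le_const (μ := μs (ψ k))
      (f := fun z => G (z + ξk k) - G (z + ξ)) (C := m * dist (ξk k) ξ)
      (Filter.Eventually.of_forall hbd)
    simpa using this
  have hd0 : Tendsto (fun k => (∫ z, G (z + ξk k) ∂(μs (ψ k))) -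
      ∫ z, G (z + ξ) ∂(μs (ψ k))) atTop (nhds 0) := by
    refine squeeze_zero_norm hdiff ?_
    have h1 : Tendsto (fun k => dist (ξk k) ξ) atTop (nhds 0) :=
      tendsto_iff_dist_tendsto_zero.mp htend
    have := h1.const_mul (m : ℝ)
    simpa using this
  have hB : Tendsto (fun k => ∫ z, G (z + ξk k) ∂(μs (ψ k))) atTop
      (nhds (∫ z, G (z + ξ) ∂μ)) := by
    have h2 := hd0.add hA
    rw [zero_add] at h2
    convert h2 using 2 with k
    ring
  -- each term is bounded by y'.toReal
  have hbound : ∀ k, (∫ z, G (z + ξk k) ∂(μs (ψ k))) ≤ y'.toReal := by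
    intro k
    have heq : ENNReal.ofReal (∫ z, G (z + ξk k) ∂(μs (ψ k))) =
        ∫⁻ z, ENNReal.ofReal (G (z + ξk k)) ∂(μs (ψ k)) :=
      ofReal_integral_eq_lintegral_ofReal (hint _ _)
        (Filter.Eventually.of_forall fun z => hG0 _)
    have hle : (∫⁻ z, ENNReal.ofReal (G (z + ξk k)) ∂(μs (ψ k))) ≤
        ∫⁻ z, F (z + ξk k) ∂(μs (ψ k)) :=
      lintegral_mono fun z => ofReal_lscApprox_le F m _
    have : ENNReal.ofReal (∫ z, G (z + ξk k) ∂(μs (ψ k))) ≤ y' :=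
      heq ▸ (hle.trans (hμslt (ψ k)).le)
    exact (ENNReal.ofReal_le_iff_le_toReal hy'T).mp this
  have hlim : (∫ z, G (z + ξ) ∂μ) ≤ y'.toReal := le_of_tendsto hB
    (Filter.Eventually.of_forall hbound)
  -- contradiction with the choice of m
  have hfin : (∫⁻ z, ENNReal.ofReal (G (z + ξ)) ∂μ) ≤ y' := by
    have heq : ENNReal.ofReal (∫ z, G (z + ξ) ∂μ) =
        ∫⁻ z, ENNReal.ofReal (G (z + ξ)) ∂μ :=
      ofReal_integral_eq_lintegral_ofReal (hint _ _)
        (Filter.Eventually.of_forall fun z => hG0 _)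
    rw [← heq, ← ENNReal.ofReal_toReal hy'T]
    exact ENNReal.ofReal_le_ofReal hlim
  exact absurd hm (not_lt.mpr hfin)

end
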